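/- arXiv:2401.16987 — 2 statements merged into one kernel-verified Lean document; each statement's English description precedes it below -/
import Mathlib

section
/- Let v : ℝ → ℝ and let w : ℝ → ℝ be locally integrable, and assume v(b) - v(a) = ∫_a^b w(t) dt for all real a ≤ b. Then for every Lebesgue-null set M ⊆ ℝ, the set { t ∈ ℝ : v(t) ∈ M and w(t) ≠ 0 } is Lebesgue-null. -/
open MeasureTheory Set Filter Metric
open scoped Topology ENNReal

/-- A set on which a function expands distances by a factor `1/K` and whose image is null
is itself null (via the `K`-Lipschitz inverse and 1-dimensional Hausdorff measure). -/
lemma null_of_expanding_image_null (v : ℝ → ℝ) (s : Set ℝ) (K : ℝ) (hK : 0 ≤ K)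
    (hexp : ∀ t ∈ s, ∀ t' ∈ s, dist t t' ≤ K * dist (v t) (v t'))
    (him : volume (v '' s) = 0) : volume s = 0 := by
  set g := Function.invFunOn v s with hg
  have hmem : ∀ y ∈ v '' s, g y ∈ s := fun y hy => Function.invFunOn_mem hy
  have happ : ∀ y ∈ v '' s, v (g y) = y := fun y hy => Function.invFunOn_eq hy
  have hlip : LipschitzOnWith (Real.toNNReal K) g (v '' s) := by
    apply LipschitzOnWith.of_dist_le'
    intro y hy y' hy'
    calc dist (g y) (g y') ≤ K * dist (v (g y)) (v (g y')) :=
          hexp _ (hmem y hy) _ (hmem y' hy')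
      _ = K * dist y y' := by rw [happ y hy, happ y' hy']
  have hsub : s ⊆ g '' (v '' s) := by
    intro t ht
    have h1 : v t ∈ v '' s := mem_image_of_mem v ht
    have h2 : dist t (g (v t)) ≤ K * dist (v t) (v (g (v t))) :=
      hexp _ ht _ (hmem _ h1)
    rw [happ _ h1] at h2
    simp only [dist_self, mul_zero] at h2
    have : t = g (v t) := by
      have := dist_nonneg (x := t) (y := g (v t))
      have : dist t (g (v t)) = 0 := le_antisymm h2 this
      exact dist_eq_zero.1 this
    exact ⟨v t, h1, this.symm⟩
  have := hlip.hausdorffMeasure_image_le (zero_le_one (α := ℝ))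
  refine le_antisymm ?_ zero_le
  calc volume s ≤ volume (g '' (v '' s)) := measure_mono hsub
    _ = μH[1] (g '' (v '' s)) := by rw [MeasureTheory.hausdorffMeasure_real]
    _ ≤ (Real.toNNReal K : ℝ≥0∞) ^ (1 : ℝ) * μH[1] (v '' s) := this
    _ = 0 := by
        rw [MeasureTheory.hausdorffMeasure_real, him, mul_zero]

/-- De la Vallée-Poussin's lemma: a locally absolutely continuous function `v`
(with a.e. derivative `w`) has vanishing derivative a.e. on the preimage of a null set. -/
theorem stmt8 (v w : ℝ → ℝ)
    (hw : LocallyIntegrable w volume)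
    (hftc : ∀ a b : ℝ, a ≤ b → v b - v a = ∫ t in a..b, w t)
    (M : Set ℝ) (hM : volume M = 0) :
    volume {t : ℝ | v t ∈ M ∧ w t ≠ 0} = 0 := by
  -- FTC in both directions
  have key : ∀ t x : ℝ, v x - v t = ∫ y in t..x, w y := by
    intro t x
    rcases le_total t x with h | h
    · exact hftc t x h
    · rw [intervalIntegral.integral_symm, ← hftc x t h]; ring
  have hwint : ∀ t x : ℝ, IntervalIntegrable w volume t x := fun t x =>
    intervalIntegrable_iff.2
      ((hw.integrableOn_isCompact isCompact_uIcc).mono_set uIoc_subset_uIcc)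
  -- the local expansion property
  set P : ℕ → ℝ → Prop :=
    fun n t => ∀ x : ℝ, |x - t| ≤ 1 / ((n : ℝ) + 1) →
      |x - t| / ((n : ℝ) + 1) ≤ |v x - v t| with hP
  set S : ℕ → ℚ → Set ℝ :=
    fun n q => {t | v t ∈ M ∧ P n t ∧ t ∈ Icc (q : ℝ) ((q : ℝ) + 1 / ((n : ℝ) + 1))} with hSdef
  -- each piece S n q is null
  have hS : ∀ n q, volume (S n q) = 0 := by
    intro n q
    apply null_of_expanding_image_null v (S n q) ((n : ℝ) + 1) (by positivity)
    · intro t ht t' ht'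
      have hIcc := ht.2.2
      have hIcc' := ht'.2.2
      have hle : |t' - t| ≤ 1 / ((n : ℝ) + 1) := by
        rw [abs_sub_le_iff]
        constructor <;> [linarith [hIcc.1, hIcc.2, hIcc'.1, hIcc'.2];
          linarith [hIcc.1, hIcc.2, hIcc'.1, hIcc'.2]]
      have := ht.2.1 t' hle
      have hpos : (0 : ℝ) < (n : ℝ) + 1 := by positivity
      rw [Real.dist_eq, Real.dist_eq, abs_sub_comm t t', abs_sub_comm (v t) (v t')]
      rw [div_le_iff₀ hpos] at this
      linarith [this]
    · apply measure_mono_null (image_subset_iff.mpr fun t ht => ht.1) hM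
  -- a.e. Lebesgue point
  set L : ℝ → Prop := fun t =>
    Tendsto (fun r => ⨍ y in closedBall t r, ‖w y - w t‖) (𝓝[>] (0 : ℝ)) (𝓝 0) with hL
  have hae : ∀ᵐ t, L t := by
    filter_upwards [IsUnifLocDoublingMeasure.ae_tendsto_average_norm_sub (μ := volume) hw 1]
      with t ht
    exact ht (fun _ : ℝ => t) id tendsto_id
      (by filter_upwards [self_mem_nhdsWithin] with r (hr : 0 < r)
          exact mem_closedBall_self (by simpa using hr.le))
  -- at a Lebesgue point with w t ≠ 0 and v t ∈ M, t lies in some piece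
  have hcover : ∀ t, L t → v t ∈ M → w t ≠ 0 → ∃ n q, t ∈ S n q := by
    intro t hLt hv hwt
    set c := |w t| with hc
    have hcpos : 0 < c := abs_pos.2 hwt
    have hev : ∀ᶠ r in 𝓝[>] (0 : ℝ),
        (⨍ y in closedBall t r, ‖w y - w t‖) < c / 4 :=
      hLt.eventually_lt_const (by positivity)
    obtain ⟨δ, hδ0, hδ⟩ := mem_nhdsGT_iff_exists_Ioc_subset.1 hev
    obtain ⟨n, hn⟩ := exists_nat_one_div_lt (lt_min hδ0 (by positivity : (0:ℝ) < c / 2))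
    have hn1 : 1 / ((n : ℝ) + 1) < δ := hn.trans_le (min_le_left _ _)
    have hn2 : 1 / ((n : ℝ) + 1) < c / 2 := hn.trans_le (min_le_right _ _)
    have hnpos : (0 : ℝ) < (n : ℝ) + 1 := by positivity
    have hPnt : P n t := by
      intro x hx
      rcases eq_or_ne x t with rfl | hxt
      · simp
      set r := |x - t| with hr
      have rpos : 0 < r := abs_pos.2 (sub_ne_zero.2 hxt)
      have rδ : r ≤ δ := le_of_lt (lt_of_le_of_lt hx hn1)
      have havg : (⨍ y in closedBall t r, ‖w y - w t‖) < c / 4 := hδ ⟨rpos, rδ⟩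
      have hIcb : IntegrableOn (fun y => ‖w y - w t‖) (closedBall t r) volume := by
        exact ((hw.integrableOn_isCompact (isCompact_closedBall t r)).sub
          (integrableOn_const measure_closedBall_lt_top.ne)).norm
      have hvol : (volume (closedBall t r)).toReal = 2 * r := by
        rw [Real.volume_closedBall]
        exact ENNReal.toReal_ofReal (by positivity)
      have hint : (∫ y in closedBall t r, ‖w y - w t‖) ≤ 2 * r * (c / 4) := by
        have e : (∫ y in closedBall t r, ‖w y - w t‖)
            = 2 * r * ⨍ y in closedBall t r, ‖w y - w t‖ := by
          rw [setAverage_eq, measureReal_def, hvol, smul_eq_mul]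
          field_simp
        rw [e]
        exact mul_le_mul_of_nonneg_left havg.le (by positivity)
      have hsub2 : uIoc t x ⊆ closedBall t r := by
        refine uIoc_subset_uIcc.trans ?_
        apply ((convex_closedBall t r).ordConnected).uIcc_subset
        · exact mem_closedBall_self rpos.le
        · simp only [mem_closedBall, Real.dist_eq]
          exact le_of_eq rfl
      have hIoc : (∫ y in uIoc t x, ‖w y - w t‖) ≤ ∫ y in closedBall t r, ‖w y - w t‖ := by
        apply setIntegral_mono_set hIcb
        · exact Eventually.of_forall fun y => norm_nonneg _
        · exact HasSubset.Subset.eventuallyLE hsub2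
      have hnorm : |∫ y in t..x, (w y - w t)| ≤ ∫ y in uIoc t x, ‖w y - w t‖ := by
        simpa [Real.norm_eq_abs] using
          intervalIntegral.norm_integral_le_integral_norm_uIoc
            (f := fun y => w y - w t) (a := t) (b := x) (μ := volume)
      have hdecomp : v x - v t = w t * (x - t) + ∫ y in t..x, (w y - w t) := by
        rw [key t x]
        have hsubint : IntervalIntegrable (fun y => w y - w t) volume t x :=
          (hwint t x).sub (intervalIntegrable_const)
        have : (∫ y in t..x, w y)
            = (∫ y in t..x, w t) + ∫ y in t..x, (w y - w t) := by
          rw [← intervalIntegral.integral_add intervalIntegrable_const hsubint]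
          simp
        rw [this, intervalIntegral.integral_const, smul_eq_mul]
        ring
      have hA : |w t * (x - t)| = c * r := by
        rw [abs_mul]
      have hB : |∫ y in t..x, (w y - w t)| ≤ 2 * r * (c / 4) :=
        hnorm.trans (hIoc.trans hint)
      have htri : |w t * (x - t)| ≤ |v x - v t| + |∫ y in t..x, (w y - w t)| := by
        have : w t * (x - t) = (v x - v t) - ∫ y in t..x, (w y - w t) := by
          linarith [hdecomp]
        rw [this, sub_eq_add_neg]
        exact (abs_add_le _ _).trans (by rw [abs_neg])
      have hmul : r * (1 / ((n : ℝ) + 1)) ≤ r * (c / 2) :=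
        mul_le_mul_of_nonneg_left hn2.le rpos.le
      have : |x - t| / ((n : ℝ) + 1) = r * (1 / ((n : ℝ) + 1)) := by
        rw [← hr]; ring
      rw [this]
      linarith [hA, hB, htri, hmul]
    obtain ⟨q, hq1, hq2⟩ := exists_rat_btwn (show t - 1 / ((n : ℝ) + 1) < t by
      have : (0:ℝ) < 1 / ((n : ℝ) + 1) := by positivity
      linarith)
    exact ⟨n, q, hv, hPnt, ⟨hq2.le, by linarith⟩⟩
  -- combine
  have hsubset : {t : ℝ | v t ∈ M ∧ w t ≠ 0} ⊆ {t | ¬ L t} ∪ ⋃ n, ⋃ q, S n q := by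
    intro t ht
    by_cases hLt : L t
    · right
      obtain ⟨n, q, h⟩ := hcover t hLt ht.1 ht.2
      exact mem_iUnion.2 ⟨n, mem_iUnion.2 ⟨q, h⟩⟩
    · left; exact hLt
  apply measure_mono_null hsubset
  apply measure_union_null
  · rw [ae_iff] at hae; exact hae
  · exact measure_iUnion_null fun n => measure_iUnion_null fun q => hS n q
end

section
/- Let u₁, u₂ : ℝ → ℝ be measurable functions with u₁(t) = u₂(t) for Lebesgue-almost every t ∈ ℝ. Let v : ℝ → ℝ and let w : ℝ → ℝ be locally integrable with v(b) - v(a) = ∫_a^b w(t) dt for all real a ≤ b. Then u₁(v(t))·w(t) = u₂(v(t))·w(t) for Lebesgue-almost every t ∈ ℝ. -/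
open MeasureTheory Set Filter

lemma aux_primitive_deriv (p : ℝ → ℝ) (hm : Measurable p) (hp : ∀ x, 0 ≤ p x)
    (hli : ∀ a b : ℝ, IntervalIntegrable p volume a b) :
    ∀ᵐ x, HasDerivAt (fun y => ∫ t in (0:ℝ)..y, p t) (p x) x := by
  set g : ℝ → ℝ := fun y => ∫ t in (0:ℝ)..y, p t with hg
  have hsub : ∀ a b : ℝ, g b - g a = ∫ t in a..b, p t := by
    intro a b
    rw [hg]
    simp only
    rw [← intervalIntegral.integral_add_adjacent_intervals (hli 0 a) (hli a b)]
    ring_nf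
  have hmono : Monotone g := by
    intro a b hab
    have := hsub a b
    have h2 : 0 ≤ ∫ t in a..b, p t := intervalIntegral.integral_nonneg hab (fun u _ => hp u)
    linarith
  have hcont : Continuous g := intervalIntegral.continuous_primitive hli 0
  have hsf : ∀ x, hmono.stieltjesFunction x = g x := by
    intro x
    rw [hmono.stieltjesFunction_eq]
    exact rightLim_eq_of_tendsto
      ((hcont.tendsto x).mono_left nhdsWithin_le_nhds)
  have hmeas : hmono.stieltjesFunction.measure
      = volume.withDensity (fun t => ENNReal.ofReal (p t)) := by
    refine Measure.ext_of_Ioc _ _ (fun a b hab => ?_)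
    rw [StieltjesFunction.measure_Ioc, hsf, hsf,
      withDensity_apply _ measurableSet_Ioc, hsub a b,
      intervalIntegral.integral_of_le hab.le,
      ← ofReal_integral_eq_lintegral_ofReal (hli a b).1 (ae_of_all _ fun t => hp t)]
  have hrn := Measure.rnDeriv_withDensity (volume : Measure ℝ)
    (hm.ennreal_ofReal)
  rw [← hmeas] at hrn
  filter_upwards [hmono.ae_hasDerivAt, hrn] with x hx h2
  rw [h2, ENNReal.toReal_ofReal (hp x)] at hx
  exact hx

lemma aux_v_deriv (w' : ℝ → ℝ) (hm : Measurable w')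
    (hli : ∀ a b : ℝ, IntervalIntegrable w' volume a b) (v : ℝ → ℝ)
    (hftc : ∀ a b : ℝ, a ≤ b → v b - v a = ∫ t in a..b, w' t) :
    Continuous v ∧ ∀ᵐ x, HasDerivAt v (w' x) x := by
  set p : ℝ → ℝ := fun t => (w' t + |w' t|) / 2 with hpdef
  set n : ℝ → ℝ := fun t => (|w' t| - w' t) / 2 with hndef
  have hpm : Measurable p := ((hm.add hm.abs).div_const 2)
  have hnm : Measurable n := ((hm.abs.sub hm).div_const 2)
  have hp0 : ∀ x, 0 ≤ p x := fun x => by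
    simp only [hpdef]; have := abs_nonneg (w' x); have := neg_abs_le (w' x); linarith
  have hn0 : ∀ x, 0 ≤ n x := fun x => by
    simp only [hndef]; have := le_abs_self (w' x); linarith
  have hpli : ∀ a b : ℝ, IntervalIntegrable p volume a b :=
    fun a b => ((hli a b).add (hli a b).abs).div_const 2
  have hnli : ∀ a b : ℝ, IntervalIntegrable n volume a b :=
    fun a b => ((hli a b).abs.sub (hli a b)).div_const 2
  set g : ℝ → ℝ := fun y => ∫ t in (0:ℝ)..y, p t with hgdef
  set h : ℝ → ℝ := fun y => ∫ t in (0:ℝ)..y, n t with hhdef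
  have hint : ∀ x : ℝ, ∫ t in (0:ℝ)..x, w' t = g x - h x := by
    intro x
    rw [hgdef, hhdef]
    simp only
    rw [← intervalIntegral.integral_sub (hpli 0 x) (hnli 0 x)]
    apply intervalIntegral.integral_congr
    intro t _
    simp only [hpdef, hndef]
    ring
  have hv : ∀ x, v x = v 0 + g x - h x := by
    intro x
    rcases le_total 0 x with hx | hx
    · have := hftc 0 x hx
      rw [hint x] at this; linarith
    · have := hftc x 0 hx
      rw [intervalIntegral.integral_symm, hint x] at this; linarith
  have hgc : Continuous g := intervalIntegral.continuous_primitive hpli 0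
  have hhc : Continuous h := intervalIntegral.continuous_primitive hnli 0
  have hvc : Continuous v := by
    have : v = fun x => v 0 + g x - h x := funext hv
    rw [this]; fun_prop
  refine ⟨hvc, ?_⟩
  filter_upwards [aux_primitive_deriv p hpm hp0 hpli, aux_primitive_deriv n hnm hn0 hnli]
    with x hgx hhx
  have : HasDerivAt (fun y => v 0 + g y - h y) (p x - n x) x :=
    (hgx.const_add (v 0)).sub hhx
  have hfn : v = fun y => v 0 + g y - h y := funext hv
  rw [← hfn] at this
  have heq : p x - n x = w' x := by simp only [hpdef, hndef]; ring
  rwa [heq] at this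

lemma aux_null (w' : ℝ → ℝ) (hm : Measurable w') (v : ℝ → ℝ) (hvc : Continuous v)
    (N : Set ℝ) (hNm : MeasurableSet N) (hN : volume N = 0)
    (G : Set ℝ) (hGm : MeasurableSet G) (hG : ∀ t ∈ G, HasDerivAt v (w' t) t) :
    volume {t | t ∈ G ∧ v t ∈ N ∧ w' t ≠ 0} = 0 := by
  set piece : ℚ → ℚ → ℚ → Set ℝ := fun ε δ q =>
    {t | t ∈ G ∧ v t ∈ N ∧ (0:ℝ) < ε ∧ (0:ℝ) < δ ∧ (q:ℝ) < t ∧ t < q + δ/2 ∧ (ε:ℝ) ≤ |w' t| ∧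
      ∀ y : ℚ, |(y:ℝ) - t| ≤ δ → |v y - v t - w' t * (y - t)| ≤ ε/2 * |(y:ℝ) - t|}
    with hpiece
  -- real extension of the rational approximation property
  have hreal : ∀ (ε δ q : ℚ), ∀ t ∈ piece ε δ q, ∀ y : ℝ, |y - t| < δ →
      |v y - v t - w' t * (y - t)| ≤ ε/2 * |y - t| := by
    intro ε δ q t ht y hy
    obtain ⟨-, -, hε, hδ, -, -, -, hrat⟩ := ht
    set F : ℝ → ℝ := fun z => ε/2 * |z - t| - |v z - v t - w' t * (z - t)| with hF
    have hFc : Continuous F := by fun_prop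
    have hsub : (Set.range ((↑) : ℚ → ℝ) ∩ Metric.ball t δ) ⊆ F ⁻¹' (Ici 0) := by
      rintro z ⟨⟨r, rfl⟩, hz⟩
      simp only [Metric.mem_ball, Real.dist_eq] at hz
      have := hrat r hz.le
      simp only [mem_preimage, mem_Ici, hF]
      linarith
    have hyc : y ∈ closure (Set.range ((↑) : ℚ → ℝ) ∩ Metric.ball t δ) := by
      rw [mem_closure_iff]
      intro O hO hyO
      obtain ⟨r, hr⟩ := Rat.denseRange_cast.exists_mem_open (hO.inter Metric.isOpen_ball)
        ⟨y, hyO, by simpa [Real.dist_eq] using hy⟩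
      exact ⟨r, ⟨hr.1, ⟨r, rfl⟩, hr.2⟩⟩
    have := closure_minimal hsub (isClosed_Ici.preimage hFc) hyc
    simp only [mem_preimage, mem_Ici, hF] at this
    linarith
  -- injectivity on pieces
  have hinj : ∀ (ε δ q : ℚ), Set.InjOn v (piece ε δ q) := by
    intro ε δ q t ht t' ht' hv
    by_contra hne
    have hεw := ht.2.2.2.2.2.2.1
    have hε : (0:ℝ) < ε := ht.2.2.1
    have hδ : (0:ℝ) < δ := ht.2.2.2.1
    have hd : |t' - t| < δ := by
      have h1 := ht.2.2.2.2.1; have h2 := ht.2.2.2.2.2.1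
      have h3 := ht'.2.2.2.2.1; have h4 := ht'.2.2.2.2.2.1
      rw [abs_sub_lt_iff]; constructor <;> linarith
    have := hreal ε δ q t ht t' hd
    rw [hv] at this
    simp only [sub_self, zero_sub, abs_neg, abs_mul] at this
    have ht'0 : 0 < |t' - t| := abs_pos.2 (sub_ne_zero.2 (Ne.symm hne))
    have : |w' t| ≤ ε/2 := by
      have := (mul_le_mul_iff_left₀ ht'0).1 this
      linarith
    linarith
  -- measurability of pieces
  have hmeas : ∀ (ε δ q : ℚ), MeasurableSet (piece ε δ q) := by
    intro ε δ q
    have : piece ε δ q = (G ∩ v ⁻¹' N ∩ {t : ℝ | (0:ℝ) < ε} ∩ {t : ℝ | (0:ℝ) < δ}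
        ∩ Ioo (q:ℝ) (q + δ/2) ∩ {t | (ε:ℝ) ≤ |w' t|}) ∩
        ⋂ y : ℚ, ({t : ℝ | |(y:ℝ) - t| ≤ δ}ᶜ ∪
          {t : ℝ | |v y - v t - w' t * (y - t)| ≤ ε/2 * |(y:ℝ) - t|}) := by
      ext t
      simp only [hpiece, mem_setOf_eq, mem_inter_iff, mem_preimage, mem_Ioo, mem_iInter,
        mem_union, mem_compl_iff, imp_iff_not_or]
      tauto
    rw [this]
    refine MeasurableSet.inter ?_ (MeasurableSet.iInter fun y => ?_)
    · exact ((((hGm.inter (hvc.measurable hNm)).inter (MeasurableSet.const _)).inter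
        (MeasurableSet.const _)).inter measurableSet_Ioo).inter
        (measurableSet_le measurable_const hm.abs)
    · refine MeasurableSet.union ?_ ?_
      · exact (measurableSet_le (by fun_prop) measurable_const).compl
      · have h1 : Measurable fun t : ℝ => |v (y:ℝ) - v t - w' t * ((y:ℝ) - t)| :=
          ((measurable_const.sub hvc.measurable).sub
            (hm.mul (measurable_const.sub measurable_id))).abs
        have h2 : Measurable fun t : ℝ => (ε:ℝ)/2 * |(y:ℝ) - t| :=
          (measurable_const.sub measurable_id).abs.const_mul _
        exact measurableSet_le h1 h2
  -- each piece is null, via the Jacobian estimate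
  have hnull : ∀ (ε δ q : ℚ), volume (piece ε δ q) = 0 := by
    intro ε δ q
    by_cases hε : (0:ℝ) < ε
    · have hderiv : ∀ x ∈ piece ε δ q,
          HasFDerivWithinAt v ((1 : ℝ →L[ℝ] ℝ).smulRight (w' x)) (piece ε δ q) x := by
        intro x hx
        exact (hasDerivAt_iff_hasFDerivAt.1 (hG x hx.1)).hasFDerivWithinAt
      have key := lintegral_abs_det_fderiv_le_addHaar_image volume (hmeas ε δ q) hderiv
        (hinj ε δ q)
      have himg : volume (v '' piece ε δ q) = 0 := by
        apply measure_mono_null _ hN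
        rintro z ⟨t, ht, rfl⟩
        exact ht.2.1
      have hdet : ∀ x : ℝ, ENNReal.ofReal |((1 : ℝ →L[ℝ] ℝ).smulRight (w' x)).det|
          = ENNReal.ofReal |w' x| := by
        intro x; rw [ContinuousLinearMap.smulRight_one_eq_toSpanSingleton, ContinuousLinearMap.det_toSpanSingleton]
      simp only [hdet, himg, nonpos_iff_eq_zero] at key
      have hlow : ENNReal.ofReal ε * volume (piece ε δ q)
          ≤ ∫⁻ x in piece ε δ q, ENNReal.ofReal |w' x| := by
        rw [← setLIntegral_const]
        refine setLIntegral_mono (hm.abs.ennreal_ofReal) (fun x hx => ?_)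
        exact ENNReal.ofReal_le_ofReal hx.2.2.2.2.2.2.1
      rw [key, nonpos_iff_eq_zero, mul_eq_zero] at hlow
      rcases hlow with h | h
      · exact absurd (ENNReal.ofReal_eq_zero.1 h) (not_le.2 hε)
      · exact h
    · have : piece ε δ q ⊆ ∅ := fun t ht => (hε ht.2.2.1).elim
      exact measure_mono_null this measure_empty
  -- the bad set is covered by the pieces
  have hcover : {t | t ∈ G ∧ v t ∈ N ∧ w' t ≠ 0}
      ⊆ ⋃ e : ℚ × ℚ × ℚ, piece e.1 e.2.1 e.2.2 := by
    rintro t ⟨htG, htN, htw⟩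
    have hd := hG t htG
    obtain ⟨ε, hε0, hεlt⟩ := exists_rat_btwn (abs_pos.2 htw)
    have hlo := hasDerivAt_iff_isLittleO.1 hd
    have hev := hlo.def (show (0:ℝ) < ε/2 by positivity)
    rw [Metric.eventually_nhds_iff] at hev
    obtain ⟨δ₀, hδ₀, hball⟩ := hev
    obtain ⟨δ, hδ0, hδlt⟩ := exists_rat_btwn hδ₀
    have hδ0' : (0:ℝ) < δ := by exact_mod_cast hδ0
    obtain ⟨q, hq1, hq2⟩ := exists_rat_btwn (show t - (δ:ℝ)/2 < t by linarith)
    refine mem_iUnion.2 ⟨(ε, δ, q), htG, htN, hε0, hδ0', hq2, by linarith, hεlt.le, ?_⟩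
    intro y hy
    have hdist : dist (y:ℝ) t < δ₀ := by
      rw [Real.dist_eq]; exact lt_of_le_of_lt hy hδlt
    have := hball hdist
    rw [Real.norm_eq_abs, Real.norm_eq_abs] at this
    calc |v y - v t - w' t * ((y:ℝ) - t)| = |v y - v t - ((y:ℝ) - t) • w' t| := by
          rw [smul_eq_mul, mul_comm]
      _ ≤ ε/2 * |(y:ℝ) - t| := this
  exact measure_mono_null hcover (measure_iUnion_null fun e => hnull e.1 e.2.1 e.2.2)

/-- If `u₁ = u₂` a.e. and `v` is locally absolutely continuous with a.e. derivative `w`,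
then `(u₁∘v)·w = (u₂∘v)·w` a.e.. -/
theorem stmt9 (u₁ u₂ : ℝ → ℝ) (hu₁ : Measurable u₁) (hu₂ : Measurable u₂)
    (hu : u₁ =ᵐ[volume] u₂)
    (v w : ℝ → ℝ) (hw : LocallyIntegrable w volume)
    (hftc : ∀ a b : ℝ, a ≤ b → v b - v a = ∫ t in a..b, w t) :
    (fun t => u₁ (v t) * w t) =ᵐ[volume] (fun t => u₂ (v t) * w t) := by
  -- measurable representative of `w`
  obtain ⟨w', hm, hww'⟩ : ∃ w' : ℝ → ℝ, Measurable w' ∧ w =ᵐ[volume] w' :=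
    ⟨hw.aestronglyMeasurable.mk w, hw.aestronglyMeasurable.stronglyMeasurable_mk.measurable,
      hw.aestronglyMeasurable.ae_eq_mk⟩
  have hli : ∀ a b : ℝ, IntervalIntegrable w' volume a b := by
    intro a b
    have h1 : IntegrableOn w (Set.uIcc a b) volume := hw.integrableOn_isCompact isCompact_uIcc
    have h2 : IntegrableOn w' (Set.uIcc a b) volume := h1.congr (ae_restrict_of_ae hww')
    exact h2.intervalIntegrable
  have hftc' : ∀ a b : ℝ, a ≤ b → v b - v a = ∫ t in a..b, w' t := by
    intro a b hab
    rw [hftc a b hab]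
    exact intervalIntegral.integral_congr_ae (hww'.mono fun t ht _ => ht)
  obtain ⟨hvc, hae⟩ := aux_v_deriv w' hm hli v hftc'
  -- the null set where `u₁ ≠ u₂`
  set N : Set ℝ := {x | u₁ x ≠ u₂ x} with hNdef
  have hNm : MeasurableSet N := (measurableSet_eq_fun hu₁ hu₂).compl
  have hN : volume N = 0 := hu
  -- a measurable set where `v` is differentiable with derivative `w'`
  obtain ⟨Z, hZsub, hZm, hZ0⟩ := exists_measurable_superset_of_null (ae_iff.1 hae)
  set G : Set ℝ := Zᶜ with hGdef
  have hGm : MeasurableSet G := hZm.compl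
  have hGd : ∀ t ∈ G, HasDerivAt v (w' t) t := by
    intro t ht
    by_contra hc
    exact ht (hZsub hc)
  have key := aux_null w' hm v hvc N hNm hN G hGm hGd
  filter_upwards [hww', measure_eq_zero_iff_ae_notMem.1 key, measure_eq_zero_iff_ae_notMem.1 hZ0]
    with t hww htK htZ
  by_cases h1 : u₁ (v t) = u₂ (v t)
  · rw [h1]
  · have htG : t ∈ G := htZ
    have htN : v t ∈ N := h1
    have hw0 : w' t = 0 := by
      by_contra hc
      exact htK ⟨htG, htN, hc⟩
    rw [hww, hw0, mul_zero, mul_zero]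
end
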